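/- Fix a dimension d ≥ 1 and let α > 0 and R > 0. The set A = {K ∈ 𝒦 : dimH(frontier(K) ∩ ball(0,R)) < α} is universally measurable: for every finite Borel measure μ on 𝒦, A is μ-null-measurable, i.e. measurable with respect to the μ-completion of the Borel σ-algebra of 𝒦. -/

import Mathlib

open TopologicalSpace Metric

open Set Filter MeasureTheory ENNReal EMetric

namespace Stmt15Aux

variable {E : Type*} [NormedAddCommGroup E]

/-- Auxiliary closed subsets of the hyperspace. -/
def Cset (D : Set E) (δ : ℝ) (η : ℝ≥0∞) : Set (NonemptyCompacts E) :=
  {K | ∀ x ∈ (K : Set E), EMetric.infEdist x D < η → ∀ y : E, dist y x ≤ δ → y ∈ (K : Set E)}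

lemma edist_nc (K L : NonemptyCompacts E) :
    edist K L = hausdorffEdist (K : Set E) (L : Set E) := rfl

lemma isClosed_Cset (D : Set E) (δ : ℝ) (η : ℝ≥0∞) : IsClosed (Cset D δ η) := by
  refine IsSeqClosed.isClosed ?_
  intro Kn K hKn hlim x hx hxD y hy
  have hKcl : IsClosed (K : Set E) := K.isCompact.isClosed
  rw [← hKcl.closure_eq, EMetric.mem_closure_iff_infEdist_zero, ← nonpos_iff_eq_zero]
  refine ENNReal.le_of_forall_pos_le_add fun ε hε _ => ?_
  rw [zero_add]
  set m := EMetric.infEdist x D with hm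
  have hmtop : m ≠ ⊤ := (lt_of_lt_of_le hxD le_top).ne
  set θ := η - m with hθdef
  have hθ : 0 < θ := tsub_pos_of_lt hxD
  have hmθ : m + θ ≤ η := by
    rw [hθdef, add_comm]
    exact le_of_eq (tsub_add_cancel_of_le hxD.le)
  set γ : ℝ≥0∞ := min ((ε : ℝ≥0∞) / 2) θ with hγdef
  have hγ : 0 < γ := lt_min (by simp [ENNReal.div_pos_iff, hε.ne']) hθ
  obtain ⟨N, hN⟩ := (EMetric.tendsto_atTop).1 hlim γ hγ
  have hed : hausdorffEdist (Kn N : Set E) (K : Set E) < γ := by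
    rw [← edist_nc]; exact hN N le_rfl
  -- find x' in Kn N close to x
  have hx' : EMetric.infEdist x (Kn N : Set E) < γ := by
    refine lt_of_le_of_lt (EMetric.infEdist_le_hausdorffEdist_of_mem hx) ?_
    rw [hausdorffEdist_comm]; exact hed
  obtain ⟨x', hx'mem, hxx'⟩ := EMetric.infEdist_lt_iff.1 hx'
  -- x' satisfies the hypothesis for Kn N
  have hx'D : EMetric.infEdist x' D < η := by
    calc EMetric.infEdist x' D ≤ m + edist x' x := EMetric.infEdist_le_infEdist_add_edist
    _ < m + θ := by
        refine ENNReal.add_lt_add_left hmtop ?_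
        rw [edist_comm]; exact lt_of_lt_of_le hxx' (min_le_right _ _)
    _ ≤ η := hmθ
  set y' := x' + (y - x) with hy'def
  have hyy' : dist y' x' ≤ δ := by
    have : dist y' x' = dist y x := by
      rw [hy'def, dist_eq_norm, dist_eq_norm]
      congr 1
      abel
    rw [this]; exact hy
  have hy'mem : y' ∈ (Kn N : Set E) := hKn N x' hx'mem hx'D y' hyy'
  have hyedist : edist y y' = edist x x' := by
    rw [edist_dist, edist_dist, hy'def, dist_eq_norm, dist_eq_norm]
    congr 2
    abel_nf
  calc EMetric.infEdist y (K : Set E)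
      ≤ edist y y' + EMetric.infEdist y' (K : Set E) := EMetric.infEdist_le_edist_add_infEdist
    _ ≤ edist y y' + hausdorffEdist (Kn N : Set E) (K : Set E) :=
        add_le_add le_rfl (EMetric.infEdist_le_hausdorffEdist_of_mem hy'mem)
    _ ≤ (ε : ℝ≥0∞) / 2 + (ε : ℝ≥0∞) / 2 := by
        refine add_le_add ?_ ?_
        · rw [hyedist]; exact le_trans hxx'.le (min_le_left _ _)
        · exact le_trans hed.le (min_le_left _ _)
    _ = (ε : ℝ≥0∞) := ENNReal.add_halves _

end Stmt15Aux

namespace Stmt15Aux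

variable {E : Type*} [NormedAddCommGroup E]

lemma Mset_eq {U : Set E} (hU : IsOpen U) (r : ℝ) :
    {K : NonemptyCompacts E | frontier (K : Set E) ∩ Metric.closedBall (0:E) r ⊆ U} =
      ⋃ n : ℕ, Cset (Metric.closedBall (0:E) r \ U) (1/(n+1)) (ENNReal.ofReal (1/(n+1))) := by
  set D : Set E := Metric.closedBall (0:E) r \ U with hD
  have hDclosed : IsClosed D := (Metric.isClosed_closedBall (x:=(0:E)) (ε:=r)).inter hU.isClosed_compl
  apply Set.Subset.antisymm
  · intro K hK
    by_contra hn
    simp only [Set.mem_iUnion, not_exists] at hn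
    have hn' : ∀ n : ℕ, ∃ x ∈ (K : Set E),
        EMetric.infEdist x D < ENNReal.ofReal (1/(n+1)) ∧
        ∃ y : E, dist y x ≤ 1/(n+1) ∧ y ∉ (K : Set E) := by
      intro n
      have h1 := hn n
      simp only [Cset, Set.mem_setOf_eq] at h1
      push_neg at h1
      obtain ⟨x, hx, hxD, y, hyd, hynot⟩ := h1
      exact ⟨x, hx, hxD, y, hyd, hynot⟩
    choose xs hxs hxD ys hyd hynot using hn'
    obtain ⟨x, hxK, φ, hφ, hconv⟩ := K.isCompact.tendsto_subseq hxs
    -- the bound sequence tends to zero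
    have hbnd : Tendsto (fun k : ℕ => (1:ℝ)/(k+1)) atTop (nhds 0) :=
      tendsto_one_div_add_atTop_nhds_zero_nat
    have hφbnd : ∀ k : ℕ, (1:ℝ)/(φ k + 1) ≤ 1/(k+1) := by
      intro k
      apply one_div_le_one_div_of_le (by positivity)
      have h := hφ.le_apply (x := k)
      have : (k:ℝ) ≤ (φ k : ℝ) := by exact_mod_cast h
      linarith
    -- x ∈ D
    have hxDmem : x ∈ D := by
      rw [EMetric.mem_iff_infEdist_zero_of_closed hDclosed]
      have hlim1 : Tendsto (fun k => EMetric.infEdist (xs (φ k)) D) atTop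
          (nhds (EMetric.infEdist x D)) :=
        (EMetric.continuous_infEdist.continuousAt.tendsto).comp hconv
      have hlim2 : Tendsto (fun k : ℕ => ENNReal.ofReal (1/(k+1))) atTop (nhds 0) := by
        have := ENNReal.tendsto_ofReal hbnd
        simpa using this
      have hle : ∀ k : ℕ, EMetric.infEdist (xs (φ k)) D ≤ ENNReal.ofReal (1/(k+1)) := by
        intro k
        refine le_trans (hxD (φ k)).le (ENNReal.ofReal_le_ofReal (hφbnd k))
      exact le_antisymm (le_of_tendsto_of_tendsto' hlim1 hlim2 hle) (zero_le)
    -- ys (φ k) → x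
    have hyconv : Tendsto (fun k => ys (φ k)) atTop (nhds x) := by
      rw [tendsto_iff_dist_tendsto_zero]
      refine squeeze_zero (fun k => dist_nonneg) (g := fun k =>
        1/(k+1) + dist (xs (φ k)) x) (fun k => ?_) ?_
      · calc dist (ys (φ k)) x ≤ dist (ys (φ k)) (xs (φ k)) + dist (xs (φ k)) x :=
            dist_triangle _ _ _
          _ ≤ 1/(k+1) + dist (xs (φ k)) x := by
            have := (hyd (φ k)).trans (hφbnd k)
            linarith
      · have h2 : Tendsto (fun k => dist (xs (φ k)) x) atTop (nhds 0) :=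
          tendsto_iff_dist_tendsto_zero.1 hconv
        simpa using hbnd.add h2
    have hxcl : x ∈ closure ((K : Set E)ᶜ) :=
      mem_closure_of_tendsto hyconv (Filter.Eventually.of_forall fun k => hynot (φ k))
    have hxfr : x ∈ frontier (K : Set E) := by
      rw [frontier_eq_closure_inter_closure]
      exact ⟨subset_closure hxK, hxcl⟩
    exact hxDmem.2 (hK ⟨hxfr, hxDmem.1⟩)
  · intro K hK
    simp only [Set.mem_iUnion] at hK
    obtain ⟨n, hKn⟩ := hK
    intro z hz
    by_contra hzU
    have hzD : z ∈ D := ⟨hz.2, hzU⟩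
    have hzK : z ∈ (K : Set E) := by
      have := hz.1
      rw [K.isCompact.isClosed.frontier_eq] at this
      exact this.1
    have hball : Metric.closedBall z (1/(n+1)) ⊆ (K : Set E) := by
      intro y hy
      refine hKn z hzK ?_ y (Metric.mem_closedBall.1 hy)
      show Metric.infEDist z D < _
      rw [(EMetric.mem_iff_infEdist_zero_of_closed hDclosed).1 hzD]
      exact ENNReal.ofReal_pos.2 (by positivity)
    have hint : z ∈ interior (K : Set E) :=
      mem_interior.2 ⟨Metric.ball z (1/(n+1)), (Metric.ball_subset_closedBall).trans hball,
        Metric.isOpen_ball, Metric.mem_ball_self (by positivity)⟩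
    have := hz.1
    rw [K.isCompact.isClosed.frontier_eq] at this
    exact this.2 hint

lemma measurableSet_Mset [MeasurableSpace (NonemptyCompacts E)]
    [BorelSpace (NonemptyCompacts E)] {U : Set E} (hU : IsOpen U) (r : ℝ) :
    MeasurableSet {K : NonemptyCompacts E |
      frontier (K : Set E) ∩ Metric.closedBall (0:E) r ⊆ U} := by
  rw [Mset_eq hU r]
  exact MeasurableSet.iUnion fun n => (isClosed_Cset _ _ _).measurableSet

end Stmt15Aux

namespace Stmt15Aux

lemma sum_image_le' {β γ : Type*} [DecidableEq β] [DecidableEq γ] (s : Finset β) (f : β → γ)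
    (w : γ → ℝ≥0∞) : ∑ x ∈ s.image f, w x ≤ ∑ j ∈ s, w (f j) := by
  induction s using Finset.induction with
  | empty => simp
  | @insert a s ha ih =>
    rw [Finset.image_insert, Finset.sum_insert ha]
    by_cases hmem : f a ∈ s.image f
    · rw [Finset.insert_eq_self.2 hmem]
      exact le_trans ih le_add_self
    · rw [Finset.sum_insert hmem]
      exact add_le_add le_rfl ih

lemma add_rpow_le' {q : ℝ} (hq : 0 ≤ q) (a b : ℝ≥0∞) :
    (a + b) ^ q ≤ 2 ^ q * (a ^ q + b ^ q) := by
  have h1 : a + b ≤ 2 * max a b := by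
    rw [two_mul]; exact add_le_add (le_max_left _ _) (le_max_right _ _)
  calc (a + b) ^ q ≤ (2 * max a b) ^ q := ENNReal.rpow_le_rpow h1 hq
    _ = 2 ^ q * (max a b) ^ q := ENNReal.mul_rpow_of_nonneg _ _ hq
    _ ≤ 2 ^ q * (a ^ q + b ^ q) := by
        refine mul_le_mul_right ?_ _
        rcases max_cases a b with ⟨h, _⟩ | ⟨h, _⟩ <;> rw [h]
        · exact le_self_add
        · exact le_add_self

lemma exists_small' {q : ℝ} (hq : 0 < q) (target : ℝ≥0∞) (ht : 0 < target) :
    ∃ s : ℝ, 0 < s ∧ ENNReal.ofReal (4 * s) ^ q ≤ target := by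
  rcases eq_or_ne target ⊤ with h | h
  · exact ⟨1, one_pos, by simp [h]⟩
  · set t' := target.toReal with ht'def
    have ht' : 0 < t' := ENNReal.toReal_pos ht.ne' h
    refine ⟨(min 1 t') ^ q⁻¹ / 4, by positivity, ?_⟩
    have h4 : 4 * ((min 1 t') ^ q⁻¹ / 4) = (min 1 t') ^ q⁻¹ := by ring
    rw [h4, ENNReal.ofReal_rpow_of_nonneg (by positivity) hq.le,
      Real.rpow_inv_rpow (by positivity) hq.ne']
    calc ENNReal.ofReal (min 1 t') ≤ ENNReal.ofReal t' :=
          ENNReal.ofReal_le_ofReal (min_le_right _ _)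
      _ = target := ENNReal.ofReal_toReal h

end Stmt15Aux

namespace Stmt15Aux

open scoped ENNReal

variable {E : Type*} [MetricSpace E] [MeasurableSpace E] [BorelSpace E]

lemma measure_zero_of_covers (c : ℕ → E) {q : ℝ} (hq : 0 < q) (T : Set E)
    (h : ∀ n : ℕ, ∃ F : Finset (ℕ × ℚ),
      (∑ p ∈ F, ENNReal.ofReal (2 * (p.2 : ℝ)) ^ q) ≤ ENNReal.ofReal (1 / (n + 1)) ∧
      T ⊆ ⋃ p ∈ F, Metric.ball (c p.1) (p.2 : ℝ)) :
    μH[q] T = 0 := by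
  choose F hF1 hF2 using h
  have hbnd : Tendsto (fun n : ℕ => (1 : ℝ) / (n + 1)) atTop (nhds 0) :=
    tendsto_one_div_add_atTop_nhds_zero_nat
  have hzero : Tendsto (fun n : ℕ => ENNReal.ofReal (1 / (n + 1))) atTop (nhds 0) := by
    have := ENNReal.tendsto_ofReal hbnd
    simpa using this
  set r : ℕ → ℝ≥0∞ := fun n => ENNReal.ofReal (1 / (n + 1)) ^ q⁻¹ with hrdef
  have hr : Tendsto r atTop (nhds 0) := by
    have := (ENNReal.continuous_rpow_const (y := q⁻¹)).tendsto 0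
    have h2 := this.comp hzero
    simpa [hrdef, Function.comp_def, ENNReal.zero_rpow_of_pos (inv_pos.2 hq)] using h2
  refine le_antisymm ?_ (zero_le)
  refine le_trans (MeasureTheory.Measure.hausdorffMeasure_le_liminf_sum
    (ι := fun n => {p // p ∈ F n}) q T r hr
    (fun n i => Metric.ball (c i.1.1) (i.1.2 : ℝ)) ?_ ?_) ?_
  · -- diameters bounded by r n
    refine Filter.Eventually.of_forall fun n => fun i => ?_
    have hterm : ENNReal.ofReal (2 * (i.1.2 : ℝ)) ^ q ≤ ENNReal.ofReal (1 / (n + 1)) :=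
      le_trans (Finset.single_le_sum (f := fun p => ENNReal.ofReal (2 * (p.2 : ℝ)) ^ q)
        (fun p _ => zero_le) i.2) (hF1 n)
    have h2 : ENNReal.ofReal (2 * (i.1.2 : ℝ)) ≤ r n := by
      have h3 := ENNReal.rpow_le_rpow hterm (inv_nonneg.2 hq.le)
      rwa [← ENNReal.rpow_mul, mul_inv_cancel₀ hq.ne', ENNReal.rpow_one] at h3
    refine le_trans ?_ h2
    show EMetric.diam (Metric.ball (c i.1.1) (i.1.2 : ℝ)) ≤ _
    rw [← Metric.emetric_ball]
    refine le_trans EMetric.diam_ball ?_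
    rw [ENNReal.ofReal_mul (by norm_num : (0:ℝ) ≤ 2)]
    simp
  · refine Filter.Eventually.of_forall fun n => ?_
    refine le_trans (hF2 n) (le_of_eq ?_)
    exact Set.biUnion_eq_iUnion _ _
  · have hle : ∀ n : ℕ, (∑ i : {p // p ∈ F n}, EMetric.diam
        (Metric.ball (c i.1.1) (i.1.2 : ℝ)) ^ q) ≤ ENNReal.ofReal (1 / (n + 1)) := by
      intro n
      calc (∑ i : {p // p ∈ F n}, EMetric.diam (Metric.ball (c i.1.1) (i.1.2 : ℝ)) ^ q)
          ≤ ∑ i : {p // p ∈ F n}, ENNReal.ofReal (2 * (i.1.2 : ℝ)) ^ q := by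
            refine Finset.sum_le_sum fun i _ => ?_
            refine ENNReal.rpow_le_rpow ?_ hq.le
            rw [← Metric.emetric_ball]
            refine le_trans EMetric.diam_ball ?_
            rw [ENNReal.ofReal_mul (by norm_num : (0:ℝ) ≤ 2)]
            simp
        _ = ∑ p ∈ F n, ENNReal.ofReal (2 * (p.2 : ℝ)) ^ q :=
            by exact Finset.sum_coe_sort (F n) (fun p => ENNReal.ofReal (2 * (p.2:ℝ)) ^ q)
        _ ≤ ENNReal.ofReal (1 / (n + 1)) := hF1 n
    calc liminf (fun n => ∑ i : {p // p ∈ F n},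
          EMetric.diam (Metric.ball (c i.1.1) (i.1.2 : ℝ)) ^ q) atTop
        ≤ liminf (fun n : ℕ => ENNReal.ofReal (1 / (n + 1))) atTop :=
          Filter.liminf_le_liminf (Filter.Eventually.of_forall hle)
      _ = 0 := hzero.liminf_eq

end Stmt15Aux

namespace Stmt15Aux

variable {E : Type*} [MetricSpace E] [MeasurableSpace E] [BorelSpace E]

lemma covers_of_measure_zero (c : ℕ → E) (hc : DenseRange c) {q : ℝ} (hq : 0 < q)
    {T : Set E} (hT : IsCompact T) (h : μH[q] T = 0) :
    ∀ n : ℕ, ∃ F : Finset (ℕ × ℚ),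
      (∑ p ∈ F, ENNReal.ofReal (2 * (p.2 : ℝ)) ^ q) ≤ ENNReal.ofReal (1 / (n + 1)) ∧
      T ⊆ ⋃ p ∈ F, Metric.ball (c p.1) (p.2 : ℝ) := by
  intro n
  set b := ENNReal.ofReal (1 / (n + 1)) with hb
  have hbpos : 0 < b := ENNReal.ofReal_pos.2 (by positivity)
  set M : ℝ≥0∞ := 2 ^ q * (2 ^ q + 2) with hM
  have h2q0 : (0 : ℝ≥0∞) < 2 ^ q := ENNReal.rpow_pos (by norm_num) (by norm_num)
  have h2qtop : (2 : ℝ≥0∞) ^ q ≠ ⊤ := ENNReal.rpow_ne_top_of_nonneg hq.le (by norm_num)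
  have hM0 : M ≠ 0 := by
    refine mul_ne_zero h2q0.ne' ?_
    exact (lt_of_lt_of_le h2q0 le_self_add).ne'
  have hMtop : M ≠ ⊤ := ENNReal.mul_ne_top h2qtop
    (ENNReal.add_ne_top.2 ⟨h2qtop, by norm_num⟩)
  set tgt := b / M with htgt
  have htpos : 0 < tgt := ENNReal.div_pos hbpos.ne' hMtop
  have htne : tgt ≠ ⊤ := by
    rw [htgt]
    exact (ENNReal.div_lt_top ENNReal.ofReal_ne_top hM0).ne
  set ε' := tgt.toReal / 2 with hε'
  have hε'pos : 0 < ε' := half_pos (ENNReal.toReal_pos htpos.ne' htne)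
  have hofε' : ENNReal.ofReal ε' ≤ tgt := by
    rw [hε']
    calc ENNReal.ofReal (tgt.toReal / 2) ≤ ENNReal.ofReal tgt.toReal :=
          ENNReal.ofReal_le_ofReal (by linarith [ENNReal.toReal_nonneg (a := tgt)])
      _ = tgt := ENNReal.ofReal_toReal htne
  have hε'0 : 0 < ENNReal.ofReal ε' := ENNReal.ofReal_pos.2 hε'pos
  -- extract a cover from the Hausdorff measure
  have happ := MeasureTheory.Measure.hausdorffMeasure_apply q T
  have h1 : (⨅ (t : ℕ → Set E) (_ : T ⊆ ⋃ m, t m) (_ : ∀ m, EMetric.diam (t m) ≤ 1),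
      ∑' m, ⨆ _ : (t m).Nonempty, EMetric.diam (t m) ^ q) ≤ 0 := by
    rw [← h, happ]
    exact le_iSup₂ (f := fun (r : ℝ≥0∞) (_ : 0 < r) =>
      ⨅ (t : ℕ → Set E) (_ : T ⊆ ⋃ m, t m) (_ : ∀ m, EMetric.diam (t m) ≤ r),
        ∑' m, ⨆ _ : (t m).Nonempty, EMetric.diam (t m) ^ q) 1 zero_lt_one
  have h2 : (⨅ (t : ℕ → Set E) (_ : T ⊆ ⋃ m, t m) (_ : ∀ m, EMetric.diam (t m) ≤ 1),
      ∑' m, ⨆ _ : (t m).Nonempty, EMetric.diam (t m) ^ q) < ENNReal.ofReal ε' :=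
    lt_of_le_of_lt h1 hε'0
  rw [iInf_lt_iff] at h2
  obtain ⟨t, h2⟩ := h2
  rw [iInf_lt_iff] at h2
  obtain ⟨hcov, h2⟩ := h2
  rw [iInf_lt_iff] at h2
  obtain ⟨hdiam, h5⟩ := h2
  have hdne : ∀ j, EMetric.diam (t j) ≠ ⊤ := fun j =>
    (lt_of_le_of_lt (hdiam j) ENNReal.one_lt_top).ne
  -- per-index choice of a rational ball
  have hj : ∀ j : ℕ, ∃ p : ℕ × ℚ,
      ENNReal.ofReal (2 * (p.2 : ℝ)) ^ q ≤
        2 ^ q * ((2 * EMetric.diam (t j)) ^ q + ENNReal.ofReal ε' / 2 ^ (j + 1)) ∧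
      t j ⊆ Metric.ball (c p.1) (p.2 : ℝ) := by
    intro j
    rcases Set.eq_empty_or_nonempty (t j) with hempty | ⟨z, hz⟩
    · refine ⟨(0, 0), ?_, by simp [hempty]⟩
      simp [ENNReal.zero_rpow_of_pos hq]
    · have hpow : (0:ℝ≥0∞) < ENNReal.ofReal ε' / 2 ^ (j + 1) :=
        ENNReal.div_pos hε'0.ne' (by simp)
      obtain ⟨s, hs, hs4⟩ := exists_small' hq _ hpow
      obtain ⟨i, hzi⟩ := Metric.denseRange_iff.1 hc z s hs
      set dd := (EMetric.diam (t j)).toReal with hdd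
      have hdd0 : (0:ℝ) ≤ dd := ENNReal.toReal_nonneg
      obtain ⟨ρ, hρ1, hρ2⟩ := exists_rat_btwn (show dd + s < dd + 2 * s by linarith)
      refine ⟨(i, ρ), ?_, ?_⟩
      · have h2ρ : (2:ℝ) * (ρ:ℝ) ≤ 2 * dd + 4 * s := by linarith
        calc ENNReal.ofReal (2 * (ρ:ℝ)) ^ q ≤ ENNReal.ofReal (2 * dd + 4 * s) ^ q :=
              ENNReal.rpow_le_rpow (ENNReal.ofReal_le_ofReal h2ρ) hq.le
          _ = (ENNReal.ofReal (2 * dd) + ENNReal.ofReal (4 * s)) ^ q := by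
              rw [ENNReal.ofReal_add (by linarith) (by linarith)]
          _ ≤ 2 ^ q * (ENNReal.ofReal (2 * dd) ^ q + ENNReal.ofReal (4 * s) ^ q) :=
              add_rpow_le' hq.le _ _
          _ ≤ 2 ^ q * ((2 * EMetric.diam (t j)) ^ q + ENNReal.ofReal ε' / 2 ^ (j + 1)) := by
              refine mul_le_mul_right (add_le_add ?_ hs4) _
              refine ENNReal.rpow_le_rpow (le_of_eq ?_) hq.le
              rw [ENNReal.ofReal_mul (by norm_num : (0:ℝ) ≤ 2), ENNReal.ofReal_toReal (hdne j)]
              norm_num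
      · intro w hw
        have hwz : dist w z ≤ dd := by
          rw [dist_edist]
          exact ENNReal.toReal_mono (hdne j) (EMetric.edist_le_diam_of_mem hw hz)
        have hfin : dist w (c i) < (ρ:ℝ) := by
          calc dist w (c i) ≤ dist w z + dist z (c i) := dist_triangle _ _ _
            _ < dd + s := by linarith
            _ < ρ := hρ1
        exact Metric.mem_ball.2 hfin
  choose p hp1 hp2 using hj
  have hcov2 : T ⊆ ⋃ j, Metric.ball (c (p j).1) ((p j).2 : ℝ) :=
    hcov.trans (Set.iUnion_mono hp2)
  obtain ⟨Fs, hFs⟩ := hT.elim_finite_subcover _ (fun j => Metric.isOpen_ball) hcov2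
  classical
  refine ⟨Fs.image p, ?_, ?_⟩
  · calc ∑ p' ∈ Fs.image p, ENNReal.ofReal (2 * (p'.2:ℝ)) ^ q
        ≤ ∑ j ∈ Fs, ENNReal.ofReal (2 * ((p j).2:ℝ)) ^ q := sum_image_le' _ _ _
      _ ≤ ∑ j ∈ Fs, 2 ^ q * ((2 * EMetric.diam (t j)) ^ q + ENNReal.ofReal ε' / 2 ^ (j + 1)) :=
          Finset.sum_le_sum fun j _ => hp1 j
      _ = 2 ^ q * ((∑ j ∈ Fs, (2 * EMetric.diam (t j)) ^ q) +
            ∑ j ∈ Fs, ENNReal.ofReal ε' / 2 ^ (j + 1)) := by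
          rw [← Finset.sum_add_distrib, Finset.mul_sum]
      _ ≤ 2 ^ q * (2 ^ q * ENNReal.ofReal ε' + 2 * ENNReal.ofReal ε') := by
          refine mul_le_mul_right (add_le_add ?_ ?_) _
          · have heq : ∀ j ∈ Fs, (2 * EMetric.diam (t j)) ^ q = 2 ^ q * EMetric.diam (t j) ^ q :=
              fun j _ => ENNReal.mul_rpow_of_nonneg _ _ hq.le
            rw [Finset.sum_congr rfl heq, ← Finset.mul_sum]
            refine mul_le_mul_right ?_ _
            refine le_trans ?_ h5.le
            refine le_trans (Finset.sum_le_sum fun j _ => ?_) (ENNReal.sum_le_tsum Fs)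
            by_cases hne : (t j).Nonempty
            · rw [iSup_pos hne]
            · rw [Set.not_nonempty_iff_eq_empty.1 hne]
              simp [EMetric.diam, ENNReal.zero_rpow_of_pos hq]
          · have h6 : ∀ j ∈ Fs, ENNReal.ofReal ε' / 2 ^ (j + 1) =
                ENNReal.ofReal ε' * (2⁻¹ : ℝ≥0∞) ^ (j + 1) := by
              intro j _; rw [div_eq_mul_inv, ENNReal.inv_pow]
            rw [Finset.sum_congr rfl h6, ← Finset.mul_sum, mul_comm]
            refine mul_le_mul_left ?_ _
            calc ∑ j ∈ Fs, (2⁻¹ : ℝ≥0∞) ^ (j + 1)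
                ≤ ∑' j : ℕ, (2⁻¹ : ℝ≥0∞) ^ (j + 1) := ENNReal.sum_le_tsum Fs
              _ ≤ ∑' j : ℕ, (2⁻¹ : ℝ≥0∞) ^ j :=
                  ENNReal.tsum_le_tsum fun j =>
                    pow_le_pow_of_le_one (zero_le) (ENNReal.inv_le_one.2 one_le_two)
                      (Nat.le_succ j)
              _ = 2 := by
                  rw [ENNReal.tsum_geometric, ENNReal.one_sub_inv_two, inv_inv]
      _ = ENNReal.ofReal ε' * M := by rw [hM]; ring
      _ ≤ tgt * M := mul_le_mul_left hofε' _
      _ = b := by rw [htgt]; exact ENNReal.div_mul_cancel hM0 hMtop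
  · intro x hx
    obtain ⟨j, hjF, hxj⟩ := Set.mem_iUnion₂.1 (hFs hx)
    exact Set.mem_iUnion₂.2 ⟨p j, Finset.mem_image_of_mem p hjF, hxj⟩

end Stmt15Aux


set_option maxHeartbeats 1000000 in
open Stmt15Aux in
/-- Lemma 2.1(b): `{K ∈ 𝒦 : dimH(∂K ∩ B(0,R)) < α}` is universally measurable, i.e.
null-measurable for every finite Borel measure on the hyperspace `𝒦`. -/
theorem stmt15 (d : ℕ) (hd : 1 ≤ d) (α R : ℝ) (hα : 0 < α) (hR : 0 < R) :
    ∀ μ : @MeasureTheory.Measure (NonemptyCompacts (EuclideanSpace ℝ (Fin d)))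
        (borel (NonemptyCompacts (EuclideanSpace ℝ (Fin d)))),
      @MeasureTheory.IsFiniteMeasure _ _ μ →
      @MeasureTheory.NullMeasurableSet (NonemptyCompacts (EuclideanSpace ℝ (Fin d)))
        (borel (NonemptyCompacts (EuclideanSpace ℝ (Fin d))))
        {K : NonemptyCompacts (EuclideanSpace ℝ (Fin d)) |
          dimH (frontier (K : Set (EuclideanSpace ℝ (Fin d))) ∩ Metric.ball 0 R)
            < ENNReal.ofReal α} μ := by
  intro μ _
  set E := EuclideanSpace ℝ (Fin d) with hE
  letI : MeasurableSpace (NonemptyCompacts E) := borel (NonemptyCompacts E)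
  haveI : BorelSpace (NonemptyCompacts E) := ⟨rfl⟩
  set c : ℕ → E := TopologicalSpace.denseSeq E with hcdef
  have hc : DenseRange c := TopologicalSpace.denseRange_denseSeq E
  -- the pointwise characterization
  have key : ∀ K : NonemptyCompacts E,
      dimH (frontier (K : Set E) ∩ Metric.ball 0 R) < ENNReal.ofReal α ↔
      ∃ qq : ℚ, (0 < (qq : ℝ) ∧ (qq : ℝ) < α) ∧ ∀ rr : ℚ, 0 < (rr : ℝ) → (rr : ℝ) < R →
        ∀ n : ℕ, ∃ F : Finset (ℕ × ℚ),
          (∑ p ∈ F, ENNReal.ofReal (2 * (p.2 : ℝ)) ^ (qq : ℝ)) ≤ ENNReal.ofReal (1 / (n + 1)) ∧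
          frontier (K : Set E) ∩ Metric.closedBall 0 (rr : ℝ) ⊆
            ⋃ p ∈ F, Metric.ball (c p.1) (p.2 : ℝ) := by
    intro K
    have hfrc : IsCompact (frontier (K : Set E)) :=
      K.isCompact.of_isClosed_subset isClosed_frontier K.isCompact.isClosed.frontier_subset
    constructor
    · intro hdim
      obtain ⟨qq, hq0, hq1, hq2⟩ := ENNReal.lt_iff_exists_rat_btwn.1 hdim
      have hqpos : 0 < (qq : ℝ) := by
        have h0 : (0 : ℝ≥0∞) < (Real.toNNReal (qq:ℝ) : ℝ≥0∞) := lt_of_le_of_lt (zero_le) hq1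
        have := ENNReal.coe_pos.1 h0
        exact_mod_cast Real.toNNReal_pos.1 this
      have hqα : (qq : ℝ) < α := by
        have := hq2
        rw [show ((Real.toNNReal (qq:ℝ) : ℝ≥0∞)) = ENNReal.ofReal (qq:ℝ) from rfl] at this
        exact (ENNReal.ofReal_lt_ofReal_iff hα).1 this
      have hmeas : μH[((qq:ℝ))] (frontier (K : Set E) ∩ Metric.ball 0 R) = 0 := by
        have h3 : dimH (frontier (K : Set E) ∩ Metric.ball 0 R) < (Real.toNNReal (qq:ℝ) : ℝ≥0∞) :=
          hq1
        have h4 := hausdorffMeasure_of_dimH_lt h3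
        rwa [Real.coe_toNNReal _ hqpos.le] at h4
      refine ⟨qq, ⟨hqpos, hqα⟩, fun rr hrr1 hrr2 => ?_⟩
      have hTsub : frontier (K : Set E) ∩ Metric.closedBall 0 (rr : ℝ) ⊆
          frontier (K : Set E) ∩ Metric.ball 0 R :=
        Set.inter_subset_inter_right _ (Metric.closedBall_subset_ball hrr2)
      have hT : IsCompact (frontier (K : Set E) ∩ Metric.closedBall 0 (rr : ℝ)) :=
        hfrc.inter_right Metric.isClosed_closedBall
      exact covers_of_measure_zero c hc hqpos hT (measure_mono_null hTsub hmeas)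
    · rintro ⟨qq, ⟨hq0, hqα⟩, hcovs⟩
      have hr0 : ∀ rr : ℚ, 0 < (rr : ℝ) → (rr : ℝ) < R →
          μH[(qq:ℝ)] (frontier (K : Set E) ∩ Metric.closedBall 0 (rr : ℝ)) = 0 :=
        fun rr h1 h2 => measure_zero_of_covers c hq0 _ (hcovs rr h1 h2)
      have hball : μH[(qq:ℝ)] (frontier (K : Set E) ∩ Metric.ball 0 R) = 0 := by
        have hsub : frontier (K : Set E) ∩ Metric.ball 0 R ⊆
            ⋃ rr ∈ {rr : ℚ | 0 < (rr : ℝ) ∧ (rr : ℝ) < R},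
              (frontier (K : Set E) ∩ Metric.closedBall 0 (rr : ℝ)) := by
          intro x hx
          obtain ⟨rr, hr1, hr2⟩ := exists_rat_btwn (Metric.mem_ball.1 hx.2)
          refine Set.mem_biUnion ⟨lt_of_le_of_lt dist_nonneg hr1, hr2⟩ ?_
          exact ⟨hx.1, Metric.mem_closedBall.2 hr1.le⟩
        refine measure_mono_null hsub ?_
        rw [measure_biUnion_null_iff (Set.to_countable _)]
        exact fun rr hrr => hr0 rr hrr.1 hrr.2
      have hd2 : dimH (frontier (K : Set E) ∩ Metric.ball 0 R) ≤ ENNReal.ofReal (qq:ℝ) := by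
        have h5 : μH[(((qq:ℝ).toNNReal : NNReal) : ℝ)]
            (frontier (K : Set E) ∩ Metric.ball 0 R) ≠ ⊤ := by
          rw [Real.coe_toNNReal _ hq0.le, hball]
          exact ENNReal.zero_ne_top
        exact dimH_le_of_hausdorffMeasure_ne_top h5
      exact lt_of_le_of_lt hd2 ((ENNReal.ofReal_lt_ofReal_iff hα).2 hqα)
  -- rewrite the set as a countable combination of measurable sets
  have hseteq : {K : NonemptyCompacts E |
      dimH (frontier (K : Set E) ∩ Metric.ball 0 R) < ENNReal.ofReal α} =
      ⋃ qq ∈ {qq : ℚ | 0 < (qq : ℝ) ∧ (qq : ℝ) < α},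
        ⋂ rr ∈ {rr : ℚ | 0 < (rr : ℝ) ∧ (rr : ℝ) < R}, ⋂ n : ℕ,
          ⋃ F ∈ {F : Finset (ℕ × ℚ) |
              (∑ p ∈ F, ENNReal.ofReal (2 * (p.2 : ℝ)) ^ (qq : ℝ)) ≤ ENNReal.ofReal (1/(n+1))},
            {K : NonemptyCompacts E | frontier (K : Set E) ∩ Metric.closedBall 0 (rr : ℝ) ⊆
              ⋃ p ∈ F, Metric.ball (c p.1) (p.2 : ℝ)} := by
    ext K
    simp only [Set.mem_setOf_eq, Set.mem_iUnion, Set.mem_iInter, exists_prop]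
    rw [key K]
    constructor
    · rintro ⟨qq, hq, hrest⟩
      exact ⟨qq, hq, fun rr hrr n => by
        obtain ⟨F, h1, h2⟩ := hrest rr hrr.1 hrr.2 n
        exact ⟨F, h1, h2⟩⟩
    · rintro ⟨qq, hq, hrest⟩
      exact ⟨qq, hq, fun rr h1 h2 n => hrest rr ⟨h1, h2⟩ n⟩
  refine MeasurableSet.nullMeasurableSet ?_
  rw [hseteq]
  refine MeasurableSet.biUnion (Set.to_countable _) fun qq _ => ?_
  refine MeasurableSet.biInter (Set.to_countable _) fun rr _ => ?_
  refine MeasurableSet.iInter fun n => ?_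
  refine MeasurableSet.biUnion (Set.to_countable _) fun F _ => ?_
  exact measurableSet_Mset (isOpen_biUnion fun p _ => Metric.isOpen_ball) _
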